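/- Let G be a primitive permutation group on an infinite set X, and let Γ₀ be a G-invariant graph on X (edge set a G-orbit on 2-subsets) that is not complete. Suppose the equivalence relation x ≡₀ y ⟺ |Γ₀(x) △ Γ₀(y)| < ∞ is universal (all pairs equivalent), and that there is a vertex x with both Γ₀(x) and X \ Γ₀(x) infinite. Then a contradiction follows; i.e., under universality of ≡₀, either Γ₀ or its complement is locally finite. -/

import Mathlib

/-- G primitive on infinite X, Γ₀ a non-complete G-invariant graph whose edge set
    is a G-orbit on 2-subsets; if ≡₀ (finite symmetric difference of neighbour sets) is
    universal, no vertex can have both its neighbour set and its complement infinite. -/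
theorem stmt6 {X : Type*} [Infinite X] (G : Subgroup (Equiv.Perm X))
    (htrans : ∀ x y : X, ∃ g ∈ G, g x = y)
    (hprim : ∀ r : Setoid X, (∀ g ∈ G, ∀ x y : X, r.r x y → r.r (g x) (g y)) →
      (∀ x y : X, r.r x y → x = y) ∨ (∀ x y : X, r.r x y))
    (Γ₀ : SimpleGraph X)
    (hinv : ∀ g ∈ G, ∀ x y : X, Γ₀.Adj x y ↔ Γ₀.Adj (g x) (g y))
    (horbit : ∀ a b c d : X, Γ₀.Adj a b → Γ₀.Adj c d →
      ∃ g ∈ G, ({g a, g b} : Set X) = {c, d})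
    (hnc : ∃ x y : X, x ≠ y ∧ ¬ Γ₀.Adj x y)
    (huniv : ∀ x y : X, (symmDiff (Γ₀.neighborSet x) (Γ₀.neighborSet y)).Finite)
    (hx : ∃ x : X, (Γ₀.neighborSet x).Infinite ∧ ((Γ₀.neighborSet x)ᶜ : Set X).Infinite) :
    False := by
  classical
  obtain ⟨x, hA, hAc⟩ := hx
  set A := Γ₀.neighborSet x with hAdef
  -- images of neighbour sets under group elements
  have himg : ∀ g ∈ G, ∀ u : X, g '' Γ₀.neighborSet u = Γ₀.neighborSet (g u) := by
    intro g hg u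
    ext z
    constructor
    · rintro ⟨w, hw, rfl⟩
      exact (hinv g hg u w).mp hw
    · intro hz
      refine ⟨g⁻¹ z, ?_, by simp⟩
      have := (hinv g hg u (g⁻¹ z)).mpr
      simp only [Equiv.Perm.inv_def, Equiv.apply_symm_apply] at this
      exact this hz
  -- differences with A are finite
  have hfin : ∀ y : X, (Γ₀.neighborSet y \ A).Finite ∧ (A \ Γ₀.neighborSet y).Finite := by
    intro y
    have h := huniv y x
    rw [Set.symmDiff_def] at h
    exact ⟨(h.subset (Set.subset_union_left)), (h.subset (Set.subset_union_right))⟩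
  -- a base point in A
  obtain ⟨y₀, hy₀⟩ := hA.nonempty
  set k : ℕ := max (Γ₀.neighborSet y₀ \ A).ncard (A \ Γ₀.neighborSet y₀).ncard with hkdef
  -- uniform bound on |N(y) \ A| for y ∈ A
  have hbound : ∀ y ∈ A, (Γ₀.neighborSet y \ A).ncard ≤ k := by
    intro y hy
    obtain ⟨g, hg, hgpair⟩ := horbit x y x y₀ hy hy₀
    rw [Set.pair_eq_pair_iff] at hgpair
    have himage : g '' (Γ₀.neighborSet y \ A) = Γ₀.neighborSet (g y) \ Γ₀.neighborSet (g x) := by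
      rw [Set.image_diff g.injective, himg g hg, himg g hg]
    have hcard : (Γ₀.neighborSet y \ A).ncard
        = (Γ₀.neighborSet (g y) \ Γ₀.neighborSet (g x)).ncard := by
      rw [← himage, Set.ncard_image_of_injective _ g.injective]
    rcases hgpair with ⟨h1, h2⟩ | ⟨h1, h2⟩
    · rw [hcard, h1, h2]
      exact le_max_left _ _
    · rw [hcard, h1, h2]
      exact le_max_right _ _
  -- pick k + 1 points outside A
  obtain ⟨Z, hZsub, hZcard⟩ := hAc.exists_subset_card_eq (k + 1)
  -- the finite set of "bad" points of A
  have hF : (⋃ z ∈ Z, (A \ Γ₀.neighborSet z)).Finite :=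
    Set.Finite.biUnion Z.finite_toSet (fun z _ => (hfin z).2)
  obtain ⟨y, hyA, hyF⟩ := (hA.diff hF).nonempty
  -- every point of Z is a neighbour of y outside A
  have hZin : (↑Z : Set X) ⊆ Γ₀.neighborSet y \ A := by
    intro z hz
    constructor
    · by_contra h
      have hyNz : y ∉ Γ₀.neighborSet z := fun hc => h (Γ₀.adj_symm hc)
      exact hyF (Set.mem_biUnion hz ⟨hyA, hyNz⟩)
    · exact hZsub hz
  have h1 : (↑Z : Set X).ncard ≤ (Γ₀.neighborSet y \ A).ncard :=
    Set.ncard_le_ncard hZin (hfin y).1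
  rw [Set.ncard_coe_finset, hZcard] at h1
  have h2 := hbound y hyA
  omega
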